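/- arXiv:2203.00313 — 2 statements merged into one kernel-verified Lean document; each statement's English description precedes it below -/
import Mathlib

section
/- Let H be a normal subgroup of G and let b be a block of kH of defect 0 (i.e. the trivial subgroup is a defect group of b as a block of kH). Let T = {g ∈ G : g^{-1}bg = b} be the inertial group of b in G, and assume |T : H| ≡ 0 mod p. Then b·(kH)_1^G = 0, where (kH)_1^G = Tr_1^G(kH) = { Σ_{g∈G} g^{-1}ag : a ∈ kH } inside kG. -/
noncomputable section

namespace LowerDefect

variable (p : ℕ) (k : Type) [Field k] (G : Type) [Group G]

/-- The conjugate `g⁻¹ a g` of an element of the group algebra. -/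
def conjElt (g : G) (a : MonoidAlgebra k G) : MonoidAlgebra k G :=
  MonoidAlgebra.of k G g⁻¹ * a * MonoidAlgebra.of k G g

/-- `T` is a set of representatives of the right cosets of `H` in `K`. -/
def IsTransversal (H K : Subgroup G) (T : Finset G) : Prop :=
  (T : Set G) ⊆ (K : Set G) ∧ ∀ x ∈ K, ∃! t, t ∈ T ∧ x * t⁻¹ ∈ H

/-- The set `X_H^K = Tr_H^K(X ∩ (kG)^H)` of relative traces from `H` to `K`
of `H`-fixed elements of `X`. -/
def relTraceSet (X : Set (MonoidAlgebra k G)) (H K : Subgroup G) : Set (MonoidAlgebra k G) :=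
  { y | ∃ a ∈ X, (∀ h ∈ H, conjElt k G h a = a) ∧
      ∃ T : Finset G, IsTransversal G H K T ∧ y = ∑ t ∈ T, conjElt k G t a }

/-- `a` lies in the subalgebra `kL` of `kG` spanned by the elements of `L`. -/
def InSubgroupAlgebra (L : Subgroup G) (a : MonoidAlgebra k G) : Prop :=
  ∀ g : G, a.coeff g ≠ 0 → g ∈ L

/-- `e` is an idempotent of `kL` commuting with `kL`, i.e. a central idempotent
of the subalgebra `kL` of `kG`. -/
def IsCentralIdemOf (L : Subgroup G) (e : MonoidAlgebra k G) : Prop :=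
  InSubgroupAlgebra k G L e ∧
    (∀ x ∈ L, MonoidAlgebra.of k G x * e = e * MonoidAlgebra.of k G x) ∧ e * e = e

/-- `e` is a block of `kL`: a primitive idempotent of the center of `kL`. -/
def IsBlockOf (L : Subgroup G) (e : MonoidAlgebra k G) : Prop :=
  IsCentralIdemOf k G L e ∧ e ≠ 0 ∧
    ∀ c d : MonoidAlgebra k G, IsCentralIdemOf k G L c → IsCentralIdemOf k G L d →
      c * d = 0 → d * c = 0 → e = c + d → c = 0 ∨ d = 0

/-- `e` is a block of `kG`. -/
abbrev IsBlock (e : MonoidAlgebra k G) : Prop := IsBlockOf k G ⊤ e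

/-- `P` is a defect group of the block `e` of `kL`: `P` is minimal with
`e ∈ (kL)_P^L`. -/
def IsDefectGroupOf (L : Subgroup G) (e : MonoidAlgebra k G) (P : Subgroup G) : Prop :=
  P ≤ L ∧ e ∈ relTraceSet k G {a | InSubgroupAlgebra k G L a} P L ∧
    ∀ R : Subgroup G, R < P → e ∉ relTraceSet k G {a | InSubgroupAlgebra k G L a} R L

/-- `P` is a defect group of the block `e` of `kG`. -/
abbrev IsDefectGroup (e : MonoidAlgebra k G) (P : Subgroup G) : Prop :=
  IsDefectGroupOf k G ⊤ e P

/-- The subspace `kL_{p'}` of `kG`: the span of the `p`-regular elements of `L`,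
described by its support condition. -/
def pRegSet (L : Subgroup G) : Set (MonoidAlgebra k G) :=
  { a | ∀ g : G, a.coeff g ≠ 0 → g ∈ L ∧ ¬ p ∣ orderOf g }

/-- The subspace `e·(kL_{p'})_R^L` of `kG`. -/
def ldSubmodule (L : Subgroup G) (e : MonoidAlgebra k G) (R : Subgroup G) :
    Submodule k (MonoidAlgebra k G) :=
  Submodule.span k {x | ∃ y ∈ relTraceSet k G (pRegSet p k G L) R L, x = e * y}

/-- The multiplicity `m_e^1(Q)` of `Q` as a lower defect group of the block `e` of `kL`
associated with `p`-regular classes: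
`dim_k( e·(kL_{p'})_Q^L / Σ_{R<Q} e·(kL_{p'})_R^L )`. -/
def lowerDefectMult (L : Subgroup G) (e : MonoidAlgebra k G) (Q : Subgroup G) : ℕ :=
  Module.finrank k
    (↥(ldSubmodule p k G L e Q) ⧸
      Submodule.comap (ldSubmodule p k G L e Q).subtype
        (⨆ (R : Subgroup G) (_ : R < Q), ldSubmodule p k G L e R))

/-- The conjugate subgroup `g Q g⁻¹`. -/
def conjSub (g : G) (Q : Subgroup G) : Subgroup G :=
  Subgroup.map (MulAut.conj g).toMonoidHom Q

/-- `Q ≤_G R` : `Q` is `G`-conjugate to a subgroup of `R`. -/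
def leG (Q R : Subgroup G) : Prop := ∃ g : G, conjSub G g Q ≤ R

/-- `Q <_G R` : `Q` is `G`-conjugate to a proper subgroup of `R`. -/
def ltG (Q R : Subgroup G) : Prop := ∃ g : G, conjSub G g Q < R

/-- `Q =_G R` : `Q` and `R` are `G`-conjugate. -/
def eqG (Q R : Subgroup G) : Prop := ∃ g : G, conjSub G g Q = R

/-- `C_P(Q)`, the centralizer of `Q` in `P`. In particular `centIn Q Q = Z(Q)`. -/
def centIn (P Q : Subgroup G) : Subgroup G := P ⊓ Subgroup.centralizer (Q : Set G)

/-- `Q` is a Sylow `p`-subgroup of `L`. -/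
def IsSylowIn (Q L : Subgroup G) : Prop :=
  Q ≤ L ∧ IsPGroup p ↥Q ∧ ¬ p ∣ Q.relIndex L

open scoped Classical in
/-- The Brauer homomorphism with respect to `Q`: the `k`-linear projection of `kG`
onto `kC_G(Q)` fixing each element of `C_G(Q)` and killing all other group elements. -/
def brauerHom (Q : Subgroup G) (a : MonoidAlgebra k G) : MonoidAlgebra k G :=
  MonoidAlgebra.ofCoeff (Finsupp.filter (fun g => g ∈ Subgroup.centralizer (Q : Set G)) a.coeff)

/-- A block of principal type: `Br_Q(e)` is a block of `kC_G(Q)` for every `p`-subgroup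
`Q` contained in a defect group of `e`. -/
def IsPrincipalType (e : MonoidAlgebra k G) : Prop :=
  IsBlock k G e ∧
    ∀ Q : Subgroup G, IsPGroup p ↥Q →
      (∃ P : Subgroup G, IsDefectGroup k G e P ∧ Q ≤ P) →
      IsBlockOf k G (Subgroup.centralizer (Q : Set G)) (brauerHom k G Q e)

open scoped Classical in
/-- The class sum `Ĉ` of the conjugacy class of `x`. -/
def classSum [Fintype G] (x : G) : MonoidAlgebra k G :=
  ∑ y ∈ Finset.univ.filter (fun y => IsConj x y), MonoidAlgebra.of k G y

variable (M : Type) [AddCommGroup M] [Module (MonoidAlgebra k G) M]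

/-- `M` is relatively `H`-projective, via Higman's criterion: some `kH`-endomorphism
of `M` has relative trace `Tr_H^G` equal to the identity.  (This is equivalent to `M`
being a direct summand of `Ind_H^G Res_H^G M`.) -/
def IsRelProjective (H : Subgroup G) : Prop :=
  ∃ f : M →+ M,
    (∀ (c : k) (m : M), f (algebraMap k (MonoidAlgebra k G) c • m)
        = algebraMap k (MonoidAlgebra k G) c • f m) ∧
    (∀ h ∈ H, ∀ m : M, f (MonoidAlgebra.of k G h • m) = MonoidAlgebra.of k G h • f m) ∧
    ∃ T : Finset G, IsTransversal G H ⊤ T ∧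
      ∀ m : M, (∑ t ∈ T, MonoidAlgebra.of k G t⁻¹ • f (MonoidAlgebra.of k G t • m)) = m

/-- `Q` is a vertex of `M`: a minimal subgroup relative to which `M` is projective. -/
def IsVertex (Q : Subgroup G) : Prop :=
  IsRelProjective k G M Q ∧ ∀ R : Subgroup G, R < Q → ¬ IsRelProjective k G M R

/-- `M` is an indecomposable `kG`-module. -/
def IsIndecomposable : Prop :=
  Nontrivial M ∧ ∀ e : M →ₗ[MonoidAlgebra k G] M, e.comp e = e → e = 0 ∨ e = LinearMap.id

/-- `M` is a simple `kGb`-module: a simple `kG`-module on which `b` acts as the identity. -/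
def IsSimpleBlockModule (b : MonoidAlgebra k G) : Prop :=
  IsSimpleModule (MonoidAlgebra k G) M ∧ ∀ m : M, b • m = m

/-- The dimension of a `kG`-module over `k`. -/
def kdim : ℕ :=
  letI := Module.compHom M (algebraMap k (MonoidAlgebra k G))
  Module.finrank k M

/-- The complexity of `M` is at most `s`: there is a projective resolution of `M` by
finitely generated projective `kG`-modules with `dim_k P_n ≤ C·n^(s-1)` for `n ≥ 1`. -/
def HasComplexityLE (s : ℕ) : Prop :=
  ∃ (P : ℕ → ModuleCat (MonoidAlgebra k G))
    (d : ∀ n : ℕ, ↥(P (n + 1)) →ₗ[MonoidAlgebra k G] ↥(P n))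
    (ε : ↥(P 0) →ₗ[MonoidAlgebra k G] M),
      (∀ n, Module.Projective (MonoidAlgebra k G) ↥(P n)) ∧
      (∀ n, Module.Finite (MonoidAlgebra k G) ↥(P n)) ∧
      Function.Surjective ε ∧
      LinearMap.range (d 0) = LinearMap.ker ε ∧
      (∀ n, LinearMap.range (d (n + 1)) = LinearMap.ker (d n)) ∧
      ∃ C : ℝ, ∀ n : ℕ, 1 ≤ n →
        (kdim k G ↥(P n) : ℝ) ≤ C * (n : ℝ) ^ ((s : ℝ) - 1)

/-- The complexity `c(M)`: the smallest `s` as above. -/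
def complexity : ℕ := sInf { s : ℕ | HasComplexityLE k G M s }

/-- `E` is an elementary abelian `p`-group. -/
def IsElemAbelian (E : Subgroup G) : Prop :=
  (∀ x ∈ E, x ^ p = 1) ∧ ∀ x ∈ E, ∀ y ∈ E, x * y = y * x

/-- The `p`-rank of `Q`: the largest rank of an elementary abelian `p`-subgroup of `Q`. -/
def pRank (Q : Subgroup G) : ℕ :=
  sSup { r : ℕ | ∃ E : Subgroup G, E ≤ Q ∧ IsElemAbelian p G E ∧ Nat.card E = p ^ r }

/-- `G` is `p`-solvable: it has a normal series each of whose factors is a `p`-group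
or a group of order prime to `p`. -/
def IsPSolvable : Prop :=
  ∃ (n : ℕ) (c : Fin (n + 1) → Subgroup G),
    c 0 = ⊥ ∧ c (Fin.last n) = ⊤ ∧
      ∀ i : Fin n, c i.castSucc ≤ c i.succ ∧
        ((c i.castSucc).subgroupOf (c i.succ)).Normal ∧
        ((∃ m : ℕ, (c i.castSucc).relIndex (c i.succ) = p ^ m) ∨
          ¬ p ∣ (c i.castSucc).relIndex (c i.succ))

/-- `G` is `p`-nilpotent: it has a normal subgroup of order prime to `p` and of
`p`-power index. -/
def IsPNilpotent : Prop :=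
  ∃ N : Subgroup G, N.Normal ∧ ¬ p ∣ Nat.card N ∧ ∃ n : ℕ, N.index = p ^ n

/-- `P` is a projective cover of `M`: `P` is projective and admits a surjection onto `M`
with superfluous kernel. -/
def IsProjectiveCover (P : Type) [AddCommGroup P] [Module (MonoidAlgebra k G) P] : Prop :=
  Module.Projective (MonoidAlgebra k G) P ∧
    ∃ f : P →ₗ[MonoidAlgebra k G] M, Function.Surjective f ∧
      ∀ N : Submodule (MonoidAlgebra k G) P, N ⊔ LinearMap.ker f = ⊤ → N = ⊤


-- additional defs for statement 12

/-- `U` is a `k`-subspace of `M` stable under the action of `Q`, i.e. a `kQ`-submodule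
of `Res_Q^G M`. -/
def IsQSubspace (Q : Subgroup G) (U : Set M) : Prop :=
  (0 : M) ∈ U ∧ (∀ u ∈ U, ∀ v ∈ U, u + v ∈ U) ∧
    (∀ (c : k), ∀ u ∈ U, algebraMap k (MonoidAlgebra k G) c • u ∈ U) ∧
    ∀ q ∈ Q, ∀ u ∈ U, MonoidAlgebra.of k G q • u ∈ U

/-- The subset `U` of `M` has a `k`-basis with `n` elements, i.e. `dim_k U = n`. -/
def HasKDim (U : Set M) (n : ℕ) : Prop :=
  ∃ f : Fin n → M, (∀ i, f i ∈ U) ∧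
    ∀ u ∈ U, ∃! c : Fin n → k, u = ∑ i, algebraMap k (MonoidAlgebra k G) (c i) • f i


section Aux

open Finset Polynomial

variable {k} {G}

local notation "𝓐" => MonoidAlgebra k G
local notation "og" => MonoidAlgebra.of k G

theorem conj_apply (g : G) (a : 𝓐) (y : G) :
    (conjElt k G g a).coeff y = a.coeff (g * y * g⁻¹) := by
  unfold conjElt
  rw [MonoidAlgebra.of_apply, MonoidAlgebra.of_apply, MonoidAlgebra.coeff_mul_single_apply,
    MonoidAlgebra.coeff_single_mul_apply]
  rw [inv_inv, one_mul, mul_one, mul_assoc]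

theorem og_mul_og_inv (g : G) : og g * og g⁻¹ = (1 : 𝓐) := by
  rw [← map_mul, mul_inv_cancel, map_one]

theorem og_inv_mul_og (g : G) : og g⁻¹ * og g = (1 : 𝓐) := by
  rw [← map_mul, inv_mul_cancel, map_one]

theorem conj_mul (g : G) (x y : 𝓐) :
    conjElt k G g (x * y) = conjElt k G g x * conjElt k G g y := by
  unfold conjElt
  have h : x * y = x * (og g * og g⁻¹) * y := by rw [og_mul_og_inv, mul_one]
  rw [h]; noncomm_ring

theorem conj_conj (g g' : G) (x : 𝓐) :
    conjElt k G g (conjElt k G g' x) = conjElt k G (g' * g) x := by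
  unfold conjElt
  rw [mul_inv_rev, map_mul, map_mul]
  noncomm_ring

theorem conj_one_elt (x : 𝓐) : conjElt k G 1 x = x := by
  unfold conjElt; rw [inv_one, map_one, one_mul, mul_one]

theorem conj_sum {ι : Type*} (g : G) (s : Finset ι) (f : ι → 𝓐) :
    conjElt k G g (∑ i ∈ s, f i) = ∑ i ∈ s, conjElt k G g (f i) := by
  unfold conjElt; rw [Finset.mul_sum, Finset.sum_mul]

theorem conj_smul (g : G) (c : k) (x : 𝓐) :
    conjElt k G g (c • x) = c • conjElt k G g x := by
  unfold conjElt; rw [mul_smul_comm, smul_mul_assoc]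

theorem conj_inv_fix {g : G} {x : 𝓐} (h : conjElt k G g x = x) :
    conjElt k G g⁻¹ x = x := by
  conv_lhs => rw [← h]
  rw [conj_conj, mul_inv_cancel, conj_one_elt]

theorem conj_fix_of_comm {g : G} {x : 𝓐} (h : og g * x = x * og g) :
    conjElt k G g x = x := by
  unfold conjElt
  rw [mul_assoc, ← h, ← mul_assoc, og_inv_mul_og, one_mul]

theorem comm_of_conj_fix {g : G} {x : 𝓐} (h : conjElt k G g x = x) :
    og g * x = x * og g := by
  unfold conjElt at h
  have := congrArg (fun y => og g * y) h
  simp only [← mul_assoc, og_mul_og_inv, one_mul] at this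
  exact this.symm

-- membership lemmas
variable {H : Subgroup G}

theorem insub_zero : InSubgroupAlgebra k G H 0 := fun g hg => absurd rfl hg

theorem insub_add {a b : 𝓐} (ha : InSubgroupAlgebra k G H a)
    (hb : InSubgroupAlgebra k G H b) : InSubgroupAlgebra k G H (a + b) := by
  intro g hg
  by_contra hgH
  have h1 : a.coeff g = 0 := by by_contra h; exact hgH (ha g h)
  have h2 : b.coeff g = 0 := by by_contra h; exact hgH (hb g h)
  have : (a + b).coeff g = a.coeff g + b.coeff g := by
    rw [MonoidAlgebra.coeff_add, Finsupp.add_apply]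
  exact hg (by rw [this, h1, h2, add_zero])

theorem insub_smul {a : 𝓐} (c : k) (ha : InSubgroupAlgebra k G H a) :
    InSubgroupAlgebra k G H (c • a) := by
  intro g hg
  apply ha
  intro h0
  have : (c • a).coeff g = c • a.coeff g := MonoidAlgebra.coeff_smul_apply c a g
  exact hg (by rw [this, h0, smul_zero])

theorem insub_sum {ι : Type*} {s : Finset ι} {f : ι → 𝓐}
    (hf : ∀ i ∈ s, InSubgroupAlgebra k G H (f i)) :
    InSubgroupAlgebra k G H (∑ i ∈ s, f i) := by
  classical
  induction s using Finset.induction_on with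
  | empty => simpa using (insub_zero (H := H))
  | insert _ _ hnot ih =>
    rw [Finset.sum_insert hnot]
    exact insub_add (hf _ (Finset.mem_insert_self _ _))
      (ih fun i hi => hf i (Finset.mem_insert_of_mem hi))

theorem insub_sub {a b : 𝓐} (ha : InSubgroupAlgebra k G H a)
    (hb : InSubgroupAlgebra k G H b) : InSubgroupAlgebra k G H (a - b) := by
  have : a - b = a + (-1 : k) • b := by
    rw [neg_smul, one_smul, sub_eq_add_neg]
  rw [this]
  exact insub_add ha (insub_smul _ hb)

theorem insub_mul {a b : 𝓐} (ha : InSubgroupAlgebra k G H a)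
    (hb : InSubgroupAlgebra k G H b) : InSubgroupAlgebra k G H (a * b) := by
  classical
  intro g hg
  have hmem := MonoidAlgebra.support_coeff_mul_subset a b (Finsupp.mem_support_iff.mpr hg)
  rw [Finset.mem_mul] at hmem
  obtain ⟨x, hx, y, hy, rfl⟩ := hmem
  exact H.mul_mem (ha x (Finsupp.mem_support_iff.mp hx)) (hb y (Finsupp.mem_support_iff.mp hy))

theorem insub_of {g : G} (hg : g ∈ H) : InSubgroupAlgebra k G H (og g) := by
  intro x hx
  have : x = g := by
    by_contra hne
    exact hx (by simp [MonoidAlgebra.of_apply, MonoidAlgebra.coeff_single, Finsupp.single_apply, Ne.symm hne])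
  exact this ▸ hg

theorem insub_one : InSubgroupAlgebra k G H 1 := by
  have := insub_of (k := k) (H := H) H.one_mem
  rwa [map_one] at this

theorem insub_conj (hH : H.Normal) (g : G) {a : 𝓐} (ha : InSubgroupAlgebra k G H a) :
    InSubgroupAlgebra k G H (conjElt k G g a) := by
  intro y hy
  rw [conj_apply] at hy
  have h1 : g * y * g⁻¹ ∈ H := ha _ hy
  have h2 := hH.conj_mem _ h1 g⁻¹
  have h3 : g⁻¹ * (g * y * g⁻¹) * g⁻¹⁻¹ = y := by group
  rwa [h3] at h2

theorem insub_commute {t a : 𝓐}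
    (hcomm : ∀ x ∈ H, og x * t = t * og x)
    (ha : InSubgroupAlgebra k G H a) : a * t = t * a := by
  classical
  have expand : a = ∑ g ∈ a.coeff.support, MonoidAlgebra.single g (a.coeff g) := by
    conv_lhs => rw [← MonoidAlgebra.sum_coeff_single a]
    rfl
  have hsingle : ∀ g ∈ a.coeff.support, MonoidAlgebra.single g (a.coeff g) * t = t * MonoidAlgebra.single g (a.coeff g) := by
    intro g hg
    have hgH : g ∈ H := ha g (Finsupp.mem_support_iff.mp hg)
    have h1 : (MonoidAlgebra.single g (a.coeff g) : 𝓐) = a.coeff g • og g := by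
      rw [MonoidAlgebra.of_apply, MonoidAlgebra.smul_single, smul_eq_mul, mul_one]
    rw [h1, smul_mul_assoc, hcomm g hgH, mul_smul_comm]
  calc a * t = (∑ g ∈ a.coeff.support, MonoidAlgebra.single g (a.coeff g)) * t := by rw [← expand]
    _ = ∑ g ∈ a.coeff.support, MonoidAlgebra.single g (a.coeff g) * t := by rw [Finset.sum_mul]
    _ = ∑ g ∈ a.coeff.support, t * MonoidAlgebra.single g (a.coeff g) := Finset.sum_congr rfl hsingle
    _ = t * a := by rw [← Finset.mul_sum, ← expand]

end Aux

section OgMul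
variable {k} {G}
theorem og_mul (x y : G) : (MonoidAlgebra.of k G) (x * y) = MonoidAlgebra.of k G x * MonoidAlgebra.of k G y :=
  map_mul _ _ _
end OgMul

section Aux2

open Finset Polynomial

variable {k} {G}

local notation "𝓐" => MonoidAlgebra k G
local notation "og" => MonoidAlgebra.of k G

variable [Fintype G]

open scoped Classical in
/-- the subgroup `H` as a finset -/
noncomputable def Hfin (H : Subgroup G) : Finset G := Finset.univ.filter (· ∈ H)

theorem mem_Hfin {H : Subgroup G} {g : G} : g ∈ Hfin H ↔ g ∈ H := by
  simp [Hfin]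

/-- the trace from 1 to `H` -/
noncomputable def trH (H : Subgroup G) (c : 𝓐) : 𝓐 :=
  ∑ h ∈ Hfin H, conjElt k G h c

theorem sum_Hfin_mul_right {H : Subgroup G} {M : Type*} [AddCommMonoid M]
    {g : G} (hg : g ∈ H) (f : G → M) :
    ∑ h ∈ Hfin H, f (h * g) = ∑ h ∈ Hfin H, f h := by
  apply Finset.sum_nbij' (i := fun h => h * g) (j := fun h => h * g⁻¹)
  · intro a ha; rw [mem_Hfin] at *; exact H.mul_mem ha hg
  · intro a ha; rw [mem_Hfin] at *; exact H.mul_mem ha (H.inv_mem hg)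
  · intro a _; group
  · intro a _; group
  · intro a _; rfl

theorem trH_conj {H : Subgroup G} (hH : H.Normal) (u : G) (c : 𝓐) :
    conjElt k G u (trH H c) = trH H (conjElt k G u c) := by
  unfold trH
  rw [conj_sum]
  simp only [conj_conj]
  apply Finset.sum_nbij' (i := fun h => u⁻¹ * h * u) (j := fun h => u * h * u⁻¹)
  · intro a ha; rw [mem_Hfin] at *
    have := hH.conj_mem _ ha u⁻¹; simpa using this
  · intro a ha; rw [mem_Hfin] at *
    exact hH.conj_mem _ ha u
  · intro a _; group
  · intro a _; group
  · intro a _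
    have : u * (u⁻¹ * a * u) = a * u := by group
    rw [this]

theorem trH_fix {H : Subgroup G} {g : G} (hg : g ∈ H) (c : 𝓐) :
    conjElt k G g (trH H c) = trH H c := by
  unfold trH
  rw [conj_sum]
  simp only [conj_conj]
  exact sum_Hfin_mul_right hg (fun h => conjElt k G h c)

theorem trH_insub {H : Subgroup G} (c : 𝓐) (hc : InSubgroupAlgebra k G H c) :
    InSubgroupAlgebra k G H (trH H c) := by
  apply insub_sum
  intro h hh
  rw [mem_Hfin] at hh
  exact insub_mul (insub_mul (insub_of (H.inv_mem hh)) hc) (insub_of hh)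

/-- Core Higman-type lemma: a square-zero `H`-central element of `kH` absorbed by a
"defect zero style" idempotent is zero. -/
theorem coreC {H : Subgroup G} {b d n : 𝓐}
    (hd : InSubgroupAlgebra k G H d)
    (hbsum : b = ∑ h ∈ Hfin H, conjElt k G h d)
    (hncomm : ∀ x ∈ H, og x * n = n * og x)
    (hnIn : InSubgroupAlgebra k G H n)
    (hbn : b * n = n)
    (hn2 : n * n = 0) : n = 0 := by
  classical
  set SH : Submodule k 𝓐 := MonoidAlgebra.supported k k (H : Set G) with hSH
  have memSH : ∀ {x : 𝓐}, InSubgroupAlgebra k G H x → x ∈ SH := by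
    intro x hx
    rw [hSH, MonoidAlgebra.mem_supported']
    intro g hg
    by_contra h0
    exact hg (hx g h0)
  have SHmem : ∀ {x : 𝓐}, x ∈ SH → InSubgroupAlgebra k G H x := by
    intro x hx g hg
    by_contra hgH
    exact hg (MonoidAlgebra.mem_supported'.mp hx g hgH)
  set U : Submodule k 𝓐 := SH.map (LinearMap.mulRight k n) with hU
  obtain ⟨V, hV⟩ := Submodule.exists_isCompl U
  set π : 𝓐 →ₗ[k] 𝓐 := U.subtype.comp (U.linearProjOfIsCompl V hV) with hπ
  have hπU : ∀ u ∈ U, π u = u := by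
    intro u hu
    have := Submodule.linearProjOfIsCompl_apply_left hV ⟨u, hu⟩
    simp only [hπ, LinearMap.comp_apply, Submodule.subtype_apply]
    exact congrArg Subtype.val this
  have hπmem : ∀ x, π x ∈ U := fun x => (U.linearProjOfIsCompl V hV x).2
  have hUmul : ∀ {a : 𝓐}, InSubgroupAlgebra k G H a → ∀ u ∈ U, a * u ∈ U := by
    intro a ha u hu
    rw [hU, Submodule.mem_map] at hu ⊢
    obtain ⟨x, hx, hx2⟩ := hu
    refine ⟨a * x, memSH (insub_mul ha (SHmem hx)), ?_⟩
    rw [LinearMap.mulRight_apply] at hx2 ⊢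
    rw [← hx2, mul_assoc]
  set pt : 𝓐 →ₗ[k] 𝓐 :=
    ∑ h ∈ Hfin H, (LinearMap.mulLeft k (og h⁻¹ * d)).comp
      (π.comp (LinearMap.mulLeft k (og h))) with hpt
  have hpt_apply : ∀ x, pt x = ∑ h ∈ Hfin H, og h⁻¹ * (d * π (og h * x)) := by
    intro x
    rw [hpt, LinearMap.sum_apply]
    apply Finset.sum_congr rfl
    intro h _
    simp [LinearMap.mulLeft_apply, mul_assoc]
  have hptU : ∀ x, pt x ∈ U := by
    intro x
    rw [hpt_apply]
    apply Submodule.sum_mem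
    intro h hh
    rw [mem_Hfin] at hh
    exact hUmul (insub_of (H.inv_mem hh)) _ (hUmul hd _ (hπmem _))
  have hptid : ∀ u ∈ U, pt u = b * u := by
    intro u hu
    rw [hpt_apply, hbsum, Finset.sum_mul]
    apply Finset.sum_congr rfl
    intro h hh
    rw [mem_Hfin] at hh
    rw [hπU _ (hUmul (insub_of hh) u hu)]
    unfold conjElt
    noncomm_ring
  have hptof : ∀ g ∈ H, ∀ x, pt (og g * x) = og g * pt x := by
    intro g hg x
    rw [hpt_apply, hpt_apply, Finset.mul_sum]
    have step : ∀ h : G, og h⁻¹ * (d * π (og h * (og g * x)))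
        = og g * (og (h * g)⁻¹ * (d * π (og (h * g) * x))) := by
      intro h
      conv_rhs => rw [mul_inv_rev, og_mul g⁻¹ h⁻¹, og_mul h g, mul_assoc (og h) (og g) x]
      set w := d * π (og h * (og g * x)) with hw
      have h2 : og g * (og g⁻¹ * og h⁻¹ * w) = (og g * og g⁻¹) * (og h⁻¹ * w) := by
        noncomm_ring
      rw [h2, og_mul_og_inv, one_mul]
    calc ∑ h ∈ Hfin H, og h⁻¹ * (d * π (og h * (og g * x)))
        = ∑ h ∈ Hfin H, og g * (og (h * g)⁻¹ * (d * π (og (h * g) * x))) :=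
          Finset.sum_congr rfl fun h _ => step h
      _ = ∑ h ∈ Hfin H, og g * (og h⁻¹ * (d * π (og h * x))) :=
          sum_Hfin_mul_right hg (fun h => og g * (og h⁻¹ * (d * π (og h * x))))
  have hptmul : ∀ {a : 𝓐}, InSubgroupAlgebra k G H a → ∀ x, pt (a * x) = a * pt x := by
    intro a ha x
    have expand : a = ∑ g ∈ a.coeff.support, MonoidAlgebra.single g (a.coeff g) := by
      conv_lhs => rw [← MonoidAlgebra.sum_coeff_single a]
      rfl
    conv_lhs => rw [expand]
    conv_rhs => rw [expand]
    rw [Finset.sum_mul, map_sum, Finset.sum_mul]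
    apply Finset.sum_congr rfl
    intro g hg
    have hgH : g ∈ H := ha g (Finsupp.mem_support_iff.mp hg)
    have h1 : (MonoidAlgebra.single g (a.coeff g) : 𝓐) = a.coeff g • og g := by
      rw [MonoidAlgebra.of_apply, MonoidAlgebra.smul_single, smul_eq_mul, mul_one]
    rw [h1, smul_mul_assoc, map_smul, hptof g hgH, smul_mul_assoc]
  have hnU : n ∈ U := by
    rw [hU, Submodule.mem_map]
    have hbIn : InSubgroupAlgebra k G H b := by
      rw [hbsum]
      apply insub_sum
      intro h hh
      rw [mem_Hfin] at hh
      exact insub_mul (insub_mul (insub_of (H.inv_mem hh)) hd) (insub_of hh)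
    exact ⟨b, memSH hbIn, by rw [LinearMap.mulRight_apply]; exact hbn⟩
  have h1 : pt n = n := by rw [hptid n hnU, hbn]
  have h2 : pt n = n * pt 1 := by
    conv_lhs => rw [← mul_one n]
    exact hptmul hnIn 1
  obtain ⟨y, hy, hy2⟩ := Submodule.mem_map.mp (hU ▸ hptU 1)
  rw [LinearMap.mulRight_apply] at hy2
  have hyn : y * n = n * y := insub_commute hncomm (SHmem hy)
  have : n = n * (y * n) := by
    calc n = pt n := h1.symm
      _ = n * pt 1 := h2
      _ = n * (y * n) := by rw [hy2]
  rw [this, ← mul_assoc, ← hyn, mul_assoc, hn2, mul_zero]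

end Aux2

section Aux3

open Finset Polynomial

variable {k} {G}

local notation "𝓐" => MonoidAlgebra k G
local notation "og" => MonoidAlgebra.of k G

variable [Fintype G]

theorem insub_pow {H : Subgroup G} {n : 𝓐} (hn : InSubgroupAlgebra k G H n) (j : ℕ) :
    InSubgroupAlgebra k G H (n ^ j) := by
  induction j with
  | zero => simpa using (insub_one (k := k) (H := H))
  | succ j ih => rw [pow_succ]; exact insub_mul ih hn

theorem powred {H : Subgroup G} {b d n : 𝓐}
    (hd : InSubgroupAlgebra k G H d)
    (hbsum : b = ∑ h ∈ Hfin H, conjElt k G h d)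
    (hncomm : ∀ x ∈ H, og x * n = n * og x)
    (hnIn : InSubgroupAlgebra k G H n)
    (hbn : b * n = n) :
    ∀ M, n ^ M = 0 → n = 0 := by
  intro M
  induction M using Nat.strong_induction_on with
  | _ M ih =>
    intro hM
    match M, hM, ih with
    | 0, hM, _ =>
      rw [pow_zero] at hM
      calc n = n * 1 := (mul_one n).symm
        _ = n * 0 := by rw [hM]
        _ = 0 := mul_zero n
    | 1, hM, _ => simpa using hM
    | (M + 2), hM, ih =>
      have hbnpow : b * n ^ (M + 1) = n ^ (M + 1) := by
        rw [pow_succ', ← mul_assoc, hbn]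
      have h2j : n ^ (M + 1) * n ^ (M + 1) = 0 := by
        rw [← pow_add]
        have he : (M + 1) + (M + 1) = (M + 2) + M := by omega
        rw [he, pow_add, hM, zero_mul]
      have hjcomm : ∀ x ∈ H, og x * n ^ (M + 1) = n ^ (M + 1) * og x := by
        intro x hx
        exact (Commute.pow_right (hncomm x hx) (M + 1))
      have hjz : n ^ (M + 1) = 0 :=
        coreC hd hbsum hjcomm (insub_pow hnIn (M + 1)) hbnpow h2j
      exact ih (M + 1) (by omega) hjz

theorem commute_aeval {w z : 𝓐} (h : Commute w z) (q : k[X]) :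
    Commute w (Polynomial.aeval z q) := by
  induction q using Polynomial.induction_on with
  | C a =>
    rw [Polynomial.aeval_C]
    exact (Algebra.commutes a w).symm
  | add p q hp hq =>
    rw [map_add]
    exact hp.add_right hq
  | monomial m a ih =>
    rw [map_mul, Polynomial.aeval_C, map_pow, Polynomial.aeval_X]
    exact Commute.mul_right ((Algebra.commutes a w).symm) (h.pow_right (m + 1))

/-- An `H`-stable element of `b·kH` for a defect-zero-style block is a scalar
multiple of `b`. -/
theorem lemB [IsAlgClosed k] {H : Subgroup G} {b : 𝓐}
    (hb : IsBlockOf k G H b)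
    {d : 𝓐} (hd : InSubgroupAlgebra k G H d)
    (hbsum : b = ∑ h ∈ Hfin H, conjElt k G h d)
    {c : 𝓐} (hc : InSubgroupAlgebra k G H c) :
    ∃ lam : k, b * trH H c = lam • b := by
  classical
  obtain ⟨⟨hbIn, hbcomm, hbidem⟩, hbne, hbprim⟩ := hb
  set t := trH H c with ht
  have htcomm : ∀ x ∈ H, og x * t = t * og x := by
    intro x hx
    exact comm_of_conj_fix (trH_fix hx c)
  have htIn : InSubgroupAlgebra k G H t := trH_insub c hc
  have hbt : b * t = t * b := insub_commute htcomm hbIn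
  set z := b * t with hz
  have hzIn : InSubgroupAlgebra k G H z := insub_mul hbIn htIn
  have hzcomm : ∀ x ∈ H, og x * z = z * og x := by
    intro x hx
    rw [hz, ← mul_assoc, hbcomm x hx, mul_assoc, htcomm x hx, ← mul_assoc]
  have hbz : b * z = z := by rw [hz, ← mul_assoc, hbidem]
  have hzb : z * b = z := by rw [hz, mul_assoc, ← hbt, ← mul_assoc, hbidem]
  have hbzc : Commute b z := by rw [Commute, SemiconjBy, hbz, hzb]
  haveI : Module.Finite k 𝓐 := Module.Finite.equiv
    ((MonoidAlgebra.coeffLinearEquiv k).trans (Finsupp.linearEquivFunOnFinite k k G)).symm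
  set I : Ideal k[X] :=
    { carrier := {q | b * Polynomial.aeval z q = 0}
      add_mem' := by
        intro q r hq hr
        simp only [Set.mem_setOf_eq] at *
        rw [map_add, mul_add, hq, hr, add_zero]
      zero_mem' := by simp
      smul_mem' := by
        intro q r hr
        simp only [Set.mem_setOf_eq, smul_eq_mul] at *
        rw [map_mul, ← mul_assoc, (commute_aeval hbzc q).eq, mul_assoc, hr, mul_zero] } with hIdef
  have hImem : ∀ q : k[X], q ∈ I ↔ b * Polynomial.aeval z q = 0 := fun q => Iff.rfl
  have hIne : I ≠ ⊥ := by
    intro hbot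
    have hint : IsIntegral k z := Algebra.IsIntegral.isIntegral z
    have h1 : minpoly k z ∈ I := by
      rw [hImem, minpoly.aeval, mul_zero]
    rw [hbot, Ideal.mem_bot] at h1
    exact minpoly.ne_zero hint h1
  obtain ⟨μ, hμI⟩ := (IsPrincipalIdealRing.principal I).principal
  rw [Ideal.submodule_span_eq] at hμI
  have hμmem : μ ∈ I := by rw [hμI]; exact Ideal.subset_span rfl
  have hμdvd : ∀ q ∈ I, μ ∣ q := by
    intro q hq
    rw [hμI] at hq
    exact Ideal.mem_span_singleton.mp hq
  have hμne : μ ≠ 0 := by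
    rintro rfl
    rw [Ideal.span_singleton_eq_bot.mpr rfl] at hμI
    exact hIne hμI
  have hdeg : μ.degree ≠ 0 := by
    intro h0
    have hC := Polynomial.eq_C_of_degree_le_zero (le_of_eq h0)
    have h5 : b * Polynomial.aeval z (C (μ.coeff 0)) = 0 := by
      rw [← hC]; exact (hImem μ).mp hμmem
    rw [Polynomial.aeval_C] at h5
    have hc0 : μ.coeff 0 ≠ 0 := by
      intro hcc; rw [hcc, map_zero] at hC; exact hμne hC
    have h6 : (μ.coeff 0) • b = 0 := by
      rw [← h5, ← Algebra.commutes, ← Algebra.smul_def]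
    exact hbne (by simpa [hc0] using h6)
  obtain ⟨lam, hlam⟩ := IsAlgClosed.exists_root μ hdeg
  set m := μ.rootMultiplicity lam with hm
  have hmpos : 0 < m := (Polynomial.rootMultiplicity_pos hμne).mpr hlam
  obtain ⟨gq, hfac0, hgnd⟩ := Polynomial.exists_eq_pow_rootMultiplicity_mul_and_not_dvd μ hμne lam
  set f : k[X] := (X - C lam) ^ m with hf
  have hfac : μ = f * gq := by rw [hf, hm]; exact hfac0
  have hInsub_baeval : ∀ q : k[X], InSubgroupAlgebra k G H (b * Polynomial.aeval z q) := by
    intro q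
    have hpowz : ∀ i : ℕ, InSubgroupAlgebra k G H (b * z ^ i) := by
      intro i
      induction i with
      | zero => simpa using hbIn
      | succ i ih =>
        have he : b * z ^ (i + 1) = b * z ^ i * z := by rw [mul_assoc, pow_succ]
        rw [he]
        exact insub_mul ih hzIn
    rw [Polynomial.aeval_eq_sum_range, Finset.mul_sum]
    apply insub_sum
    intro i _
    rw [mul_smul_comm]
    exact insub_smul _ (hpowz i)
  have hcomm_baeval : ∀ q : k[X], ∀ x ∈ H, og x * (b * Polynomial.aeval z q)
      = (b * Polynomial.aeval z q) * og x := by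
    intro q x hx
    have h1 : Commute (og x) z := by rw [Commute, SemiconjBy, hzcomm x hx]
    have h2 : Commute (og x) (Polynomial.aeval z q) := commute_aeval h1 q
    have h3 : Commute (og x) b := by rw [Commute, SemiconjBy, hbcomm x hx]
    exact (h3.mul_right h2).eq
  have haeval_comm : ∀ q r : k[X],
      Polynomial.aeval z q * (b * Polynomial.aeval z r) = b * Polynomial.aeval z (q * r) := by
    intro q r
    rw [← mul_assoc, ← (commute_aeval hbzc q).eq, mul_assoc, ← map_mul]
  have hmulform : ∀ q r : k[X],
      (b * Polynomial.aeval z q) * (b * Polynomial.aeval z r) = b * Polynomial.aeval z (q * r) := by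
    intro q r
    rw [mul_assoc, haeval_comm, ← mul_assoc, hbidem]
  by_cases hgu : IsUnit gq
  · -- `μ = (X - lam)^m` up to a unit; `z - lam • b` is nilpotent, hence zero
    obtain ⟨w, hw⟩ := hgu
    have hfI : f ∈ I := by
      have he : f = μ * ↑w⁻¹ := by
        rw [hfac, ← hw, mul_assoc, Units.mul_inv, mul_one]
      rw [he]
      exact Ideal.mul_mem_right _ _ hμmem
    have hbf : b * Polynomial.aeval z f = 0 := (hImem f).mp hfI
    have hnform : z - lam • b = b * (z - algebraMap k 𝓐 lam) := by
      rw [mul_sub, hbz, ← Algebra.commutes, ← Algebra.smul_def]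
    have h4 : Commute b (algebraMap k 𝓐 lam) := Commute.symm (Algebra.commutes lam b)
    have hcommb : Commute b (z - algebraMap k 𝓐 lam) := Commute.sub_right hbzc h4
    have hbpow : ∀ j : ℕ, b ^ (j + 1) = b := by
      intro j
      induction j with
      | zero => rw [pow_one]
      | succ j ih => rw [pow_succ, ih, hbidem]
    have hzeropow : (z - lam • b) ^ m = 0 := by
      obtain ⟨j, hj⟩ : ∃ j, m = j + 1 := ⟨m - 1, by omega⟩
      have hav : Polynomial.aeval z f = (z - algebraMap k 𝓐 lam) ^ m := by
        rw [hf, map_pow, map_sub, Polynomial.aeval_X, Polynomial.aeval_C]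
      rw [hnform, hcommb.mul_pow, hj, hbpow j, ← hj, ← hav, hbf]
    have hnIn2 : InSubgroupAlgebra k G H (z - lam • b) := insub_sub hzIn (insub_smul _ hbIn)
    have hncomm2 : ∀ x ∈ H, og x * (z - lam • b) = (z - lam • b) * og x := by
      intro x hx
      rw [mul_sub, sub_mul, hzcomm x hx, mul_smul_comm, smul_mul_assoc, hbcomm x hx]
    have hbn2 : b * (z - lam • b) = z - lam • b := by
      rw [mul_sub, hbz, mul_smul_comm, hbidem]
    have hn0 : z - lam • b = 0 := powred hd hbsum hncomm2 hnIn2 hbn2 m hzeropow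
    exact ⟨lam, sub_eq_zero.mp hn0⟩
  · exfalso
    have hcop : IsCoprime f gq :=
      (((Polynomial.irreducible_X_sub_C lam).coprime_iff_not_dvd).mpr hgnd).pow_left
    obtain ⟨u, v, huv⟩ := hcop
    set cc := b * Polynomial.aeval z (u * f) with hcc
    set dd := b * Polynomial.aeval z (v * gq) with hdd
    have hμzero : ∀ q : k[X], b * Polynomial.aeval z (q * μ) = 0 := by
      intro q
      rw [← haeval_comm, (hImem μ).mp hμmem, mul_zero]
    have hsum : b = cc + dd := by
      rw [hcc, hdd, ← mul_add, ← map_add, huv, map_one, mul_one]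
    have hccdd : cc * dd = 0 := by
      rw [hcc, hdd, hmulform]
      have he : (u * f) * (v * gq) = (u * v) * μ := by
        rw [hfac]; ring
      rw [he, hμzero]
    have hddcc : dd * cc = 0 := by
      rw [hcc, hdd, hmulform]
      have he : (v * gq) * (u * f) = (u * v) * μ := by
        rw [hfac]; ring
      rw [he, hμzero]
    have hccidem : cc * cc = cc := by
      rw [hcc, hmulform]
      have he : (u * f) * (u * f) = u * f - (u * v) * μ := by
        linear_combination (u * f) * huv + (u * v) * hfac
      rw [he, map_sub, mul_sub]
      rw [show b * Polynomial.aeval z ((u * v) * μ) = 0 from hμzero _, sub_zero]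
    have hddidem : dd * dd = dd := by
      rw [hdd, hmulform]
      have he : (v * gq) * (v * gq) = v * gq - (u * v) * μ := by
        linear_combination (v * gq) * huv + (u * v) * hfac
      rw [he, map_sub, mul_sub]
      rw [show b * Polynomial.aeval z ((u * v) * μ) = 0 from hμzero _, sub_zero]
    have hccC : IsCentralIdemOf k G H cc :=
      ⟨hInsub_baeval _, hcomm_baeval _, hccidem⟩
    have hddC : IsCentralIdemOf k G H dd :=
      ⟨hInsub_baeval _, hcomm_baeval _, hddidem⟩
    have hf0 : f ≠ 0 := pow_ne_zero _ (Polynomial.X_sub_C_ne_zero lam)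
    have hgq0 : gq ≠ 0 := by
      rintro rfl
      rw [mul_zero] at hfac
      exact hμne hfac
    rcases hbprim cc dd hccC hddC hccdd hddcc hsum with h0 | h0
    · -- cc = 0 forces gq to be a unit
      have huf : μ ∣ u * f := hμdvd _ ((hImem _).mpr h0)
      rw [hfac, mul_comm u f] at huf
      have hgu2 : gq ∣ u := (mul_dvd_mul_iff_left hf0).mp huf
      have : gq ∣ 1 := by
        rw [← huv]
        exact dvd_add (hgu2.mul_right f) (dvd_mul_left gq v)
      exact hgu (isUnit_of_dvd_one this)
    · -- dd = 0 forces (X - lam)^m to be a unit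
      have hvg : μ ∣ v * gq := hμdvd _ ((hImem _).mpr h0)
      rw [hfac, mul_comm v gq] at hvg
      have hfv : f ∣ v := by
        have h7 : gq * f ∣ gq * v := by
          rwa [mul_comm f gq] at hvg
        exact (mul_dvd_mul_iff_left hgq0).mp h7
      have hfone : f ∣ 1 := by
        rw [← huv]
        exact dvd_add (dvd_mul_left f u) (hfv.mul_right gq)
      have : IsUnit (X - C lam) := by
        have := isUnit_of_dvd_one hfone
        rw [hf] at this
        exact (isUnit_pow_iff hmpos.ne').mp this
      exact Polynomial.not_isUnit_X_sub_C lam this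

end Aux3

section Aux4

open Finset Polynomial

variable {k} {G}

local notation "𝓐" => MonoidAlgebra k G
local notation "og" => MonoidAlgebra.of k G

variable [Fintype G]

theorem goalA {p : ℕ} [Fact p.Prime] [CharP k p] [IsAlgClosed k]
    {H T : Subgroup G} (hH : H.Normal) {b : 𝓐}
    (hb : IsBlockOf k G H b)
    {d : 𝓐} (hd : InSubgroupAlgebra k G H d)
    (hbsum : b = ∑ h ∈ Hfin H, conjElt k G h d)
    (hT : ∀ g : G, g ∈ T ↔ conjElt k G g b = b)
    (hindex : p ∣ H.relIndex T)
    {c : 𝓐} (hc : InSubgroupAlgebra k G H c) :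
    ∑ t ∈ Hfin T, b * conjElt k G t c = 0 := by
  classical
  obtain ⟨lam, hlam⟩ := lemB hb hd hbsum hc
  have hbcomm := hb.1.2.1
  have hHT : H ≤ T := by
    intro h hh
    rw [hT]
    exact conj_fix_of_comm (hbcomm h hh)
  have hmaps : ∀ x ∈ Hfin T, (QuotientGroup.mk x : G ⧸ H) ∈
      (Hfin T).image (QuotientGroup.mk : G → G ⧸ H) :=
    fun x hx => Finset.mem_image_of_mem _ hx
  rw [← Finset.sum_fiberwise_of_maps_to hmaps (fun t => b * conjElt k G t c)]
  have hfib : ∀ q ∈ (Hfin T).image (QuotientGroup.mk : G → G ⧸ H),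
      ∑ x ∈ (Hfin T).filter (fun x => (QuotientGroup.mk x : G ⧸ H) = q),
        b * conjElt k G x c = lam • b := by
    intro q hq
    obtain ⟨u, hu, rfl⟩ := Finset.mem_image.mp hq
    have huT : u ∈ T := mem_Hfin.mp hu
    have hstep1 : ∑ x ∈ (Hfin T).filter
          (fun x => (QuotientGroup.mk x : G ⧸ H) = QuotientGroup.mk u),
        b * conjElt k G x c = ∑ h ∈ Hfin H, b * conjElt k G (u * h) c := by
      apply Finset.sum_nbij' (i := fun x => u⁻¹ * x) (j := fun h => u * h)
      · intro a ha
        rw [Finset.mem_filter] at ha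
        rw [mem_Hfin]
        exact QuotientGroup.eq.mp ha.2.symm
      · intro a ha
        rw [mem_Hfin] at ha
        rw [Finset.mem_filter, mem_Hfin]
        refine ⟨T.mul_mem huT (hHT ha), ?_⟩
        rw [QuotientGroup.eq]
        have he : (u * a)⁻¹ * u = a⁻¹ := by group
        rw [he]
        exact H.inv_mem ha
      · intro a _; group
      · intro a _; group
      · intro a _
        have he : u * (u⁻¹ * a) = a := by group
        rw [he]
    rw [hstep1]
    have hstep2 : conjElt k G u (b * trH H c) = ∑ h ∈ Hfin H, b * conjElt k G (u * h) c := by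
      rw [conj_mul, (hT u).mp huT, trH_conj hH]
      unfold trH
      rw [Finset.mul_sum]
      apply Finset.sum_congr rfl
      intro h _
      rw [conj_conj]
    rw [← hstep2, hlam, conj_smul, (hT u).mp huT]
  rw [Finset.sum_congr rfl hfib, Finset.sum_const]
  have hcard : ((Hfin T).image (QuotientGroup.mk : G → G ⧸ H)).card = H.relIndex T := by
    have hfibcard : ∀ q ∈ (Hfin T).image (QuotientGroup.mk : G → G ⧸ H),
        ((Hfin T).filter (fun x => (QuotientGroup.mk x : G ⧸ H) = q)).card
          = (Hfin H).card := by
      intro q hq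
      obtain ⟨u, hu, rfl⟩ := Finset.mem_image.mp hq
      have huT : u ∈ T := mem_Hfin.mp hu
      apply Finset.card_nbij' (i := fun x => u⁻¹ * x) (j := fun h => u * h)
      · intro a ha
        rw [Finset.mem_coe, Finset.mem_filter] at ha
        rw [Finset.mem_coe, mem_Hfin]
        exact QuotientGroup.eq.mp ha.2.symm
      · intro a ha
        rw [Finset.mem_coe, mem_Hfin] at ha
        rw [Finset.mem_coe, Finset.mem_filter, mem_Hfin]
        refine ⟨T.mul_mem huT (hHT ha), ?_⟩
        rw [QuotientGroup.eq]
        have he : (u * a)⁻¹ * u = a⁻¹ := by group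
        rw [he]
        exact H.inv_mem ha
      · intro a _; group
      · intro a _; group
    have h1 := Finset.card_eq_sum_card_fiberwise hmaps
    rw [Finset.sum_congr rfl hfibcard, Finset.sum_const, smul_eq_mul] at h1
    have hTcard : (Hfin T).card = Nat.card T := by
      rw [Nat.card_eq_fintype_card, Fintype.card_subtype, Hfin]
    have hHcard : (Hfin H).card = Nat.card H := by
      rw [Nat.card_eq_fintype_card, Fintype.card_subtype, Hfin]
    have hlag : Nat.card H * H.relIndex T = Nat.card T := by
      have h2 := Subgroup.card_mul_index (H.subgroupOf T)
      rwa [Nat.card_congr (Subgroup.subgroupOfEquivOfLe hHT).toEquiv] at h2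
    apply Nat.eq_of_mul_eq_mul_left (Nat.card_pos (α := H))
    rw [hlag, ← hTcard, h1, hHcard, mul_comm]
  rw [hcard, ← Nat.cast_smul_eq_nsmul k]
  have hzero : ((H.relIndex T : ℕ) : k) = 0 := by
    obtain ⟨s, hs⟩ := hindex
    rw [hs]
    push_cast [CharP.cast_eq_zero k p]
    ring
  rw [hzero, zero_smul]

end Aux4
theorem statement3 (p : ℕ) [Fact p.Prime] (k : Type) [Field k] [IsAlgClosed k] [CharP k p]
    (G : Type) [Group G] [Fintype G]
    (H : Subgroup G) (hH : H.Normal)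
    (b : MonoidAlgebra k G) (hb : IsBlockOf k G H b)
    (hdefect : IsDefectGroupOf k G H b ⊥)
    (T : Subgroup G) (hT : ∀ g : G, g ∈ T ↔ conjElt k G g b = b)
    (hindex : p ∣ H.relIndex T) :
    ∀ y ∈ relTraceSet k G {a | InSubgroupAlgebra k G H a} ⊥ ⊤, b * y = 0 := by
  classical
  intro y hy
  obtain ⟨a, haIn, -, S, hS, rfl⟩ := hy
  have haIn' : InSubgroupAlgebra k G H a := haIn
  have hSuniv : S = Finset.univ := by
    ext x
    simp only [Finset.mem_univ, iff_true]
    obtain ⟨t, ⟨htS, hxt⟩, -⟩ := hS.2 x (Subgroup.mem_top x)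
    have hx : x = t := mul_inv_eq_one.mp (Subgroup.mem_bot.mp hxt)
    exact hx ▸ htS
  rw [hSuniv]
  obtain ⟨-, hmem, -⟩ := hdefect
  obtain ⟨d, hdIn, -, S2, hS2, hbsum0⟩ := hmem
  have hdIn' : InSubgroupAlgebra k G H d := hdIn
  have hS2H : S2 = Hfin H := by
    ext x
    rw [mem_Hfin]
    constructor
    · intro hx
      exact hS2.1 hx
    · intro hx
      obtain ⟨t, ⟨htS, hxt⟩, -⟩ := hS2.2 x hx
      have : x = t := mul_inv_eq_one.mp (Subgroup.mem_bot.mp hxt)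
      exact this ▸ htS
  rw [hS2H] at hbsum0
  rw [Finset.mul_sum]
  have hmaps : ∀ x ∈ (Finset.univ : Finset G), (QuotientGroup.mk x : G ⧸ T) ∈
      Finset.univ.image (QuotientGroup.mk : G → G ⧸ T) :=
    fun x hx => Finset.mem_image_of_mem _ hx
  rw [← Finset.sum_fiberwise_of_maps_to hmaps (fun g => b * conjElt k G g a)]
  apply Finset.sum_eq_zero
  intro q hq
  obtain ⟨g₀, -, rfl⟩ := Finset.mem_image.mp hq
  have hbij : ∑ x ∈ Finset.univ.filter
        (fun x => (QuotientGroup.mk x : G ⧸ T) = QuotientGroup.mk g₀),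
      b * conjElt k G x a = ∑ t ∈ Hfin T, b * conjElt k G t (conjElt k G g₀ a) := by
    apply Finset.sum_nbij' (i := fun x => g₀⁻¹ * x) (j := fun t => g₀ * t)
    · intro x hx
      rw [Finset.mem_filter] at hx
      rw [mem_Hfin]
      exact QuotientGroup.eq.mp hx.2.symm
    · intro t ht
      rw [mem_Hfin] at ht
      rw [Finset.mem_filter]
      refine ⟨Finset.mem_univ _, ?_⟩
      rw [QuotientGroup.eq]
      have he : (g₀ * t)⁻¹ * g₀ = t⁻¹ := by group
      rw [he]
      exact T.inv_mem ht
    · intro x _; group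
    · intro t _; group
    · intro x _
      rw [conj_conj]
      have he : g₀ * (g₀⁻¹ * x) = x := by group
      rw [he]
  rw [hbij]
  exact goalA hH hb hdIn' hbsum0 hT hindex (insub_conj hH g₀ haIn')

end LowerDefect
end
end

section
/- Let P be a finite p-group and let 𝒳 be a set of subgroups of P with the property that whenever S ∈ 𝒳 and R is a normal subgroup of S, then R ∈ 𝒳. Let Q be a subgroup of P, let E ≤ P and F ≤ Q with E ∈ 𝒳 and F ∈ 𝒳, and suppose that |L| ≤ |F| for every subgroup L ≤ Q with L ∈ 𝒳. Then |Q : F| ≤ |P : E|. -/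
noncomputable section

namespace LowerDefect

variable (p : ℕ) (k : Type) [Field k] (G : Type) [Group G]

variable (M : Type) [AddCommGroup M] [Module (MonoidAlgebra k G) M]

private lemma subX_aux (p : ℕ) [Fact p.Prime] (P : Type) [Group P] [Fintype P]
    (hP : IsPGroup p P) (X : Set (Subgroup P))
    (hX : ∀ S ∈ X, ∀ R : Subgroup P, R ≤ S → (R.subgroupOf S).Normal → R ∈ X) :
    ∀ (n : ℕ) (S : Subgroup P), S ∈ X → ∀ R : Subgroup P, R ≤ S →
      Nat.card S - Nat.card R ≤ n → R ∈ X := by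
  intro n
  induction n with
  | zero =>
    intro S hS R hRS hcard
    have hle : Nat.card S ≤ Nat.card R := by omega
    have : R = S := SetLike.coe_injective <|
      Set.eq_of_subset_of_ncard_le hRS (by
        rwa [← Nat.card_coe_set_eq, ← Nat.card_coe_set_eq])
    exact this ▸ hS
  | succ n ih =>
    intro S hS R hRS hcard
    rcases eq_or_lt_of_le hRS with rfl | hlt
    · exact hS
    -- normalizer condition inside S
    haveI : Finite ↥S := inferInstance
    have hpS : IsPGroup p ↥S := hP.to_subgroup S
    have hnc : NormalizerCondition ↥S := by
      haveI := hpS.isNilpotent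
      exact normalizerCondition_of_isNilpotent
    have hR'lt : R.subgroupOf S < ⊤ := by
      rw [lt_top_iff_ne_top]
      intro h
      have : S ≤ R := by rwa [Subgroup.subgroupOf_eq_top] at h
      exact absurd (le_antisymm hRS this) (ne_of_lt hlt)
    obtain ⟨x, hx1, hx2⟩ := SetLike.exists_of_lt (hnc (R.subgroupOf S) hR'lt)
    have hxS : (x : P) ∈ S := x.2
    have hxR : (x : P) ∉ R := by
      intro h; exact hx2 (by rwa [Subgroup.mem_subgroupOf])
    -- x normalizes R in P
    have hxnorm : (x : P) ∈ Subgroup.normalizer (R : Set P) := by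
      rw [Subgroup.mem_normalizer_iff]
      intro h
      constructor
      · intro hh
        have hhS : h ∈ S := hRS hh
        have := (Subgroup.mem_normalizer_iff.mp hx1 ⟨h, hhS⟩).mp
          (by rwa [Subgroup.mem_subgroupOf])
        rw [Subgroup.mem_subgroupOf] at this
        simpa using this
      · intro hh
        have hhS' : (x : P) * h * (x : P)⁻¹ ∈ S := hRS hh
        have hhS : h ∈ S := by
          have := mul_mem (mul_mem (inv_mem hxS) hhS') hxS
          simpa [mul_assoc] using this
        have := (Subgroup.mem_normalizer_iff.mp hx1 ⟨h, hhS⟩).mpr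
          (by rw [Subgroup.mem_subgroupOf]; simpa using hh)
        rwa [Subgroup.mem_subgroupOf] at this
    set T := R ⊔ Subgroup.zpowers (x : P) with hTdef
    have hTS : T ≤ S := sup_le hRS (by
      rw [Subgroup.zpowers_le]; exact hxS)
    have hTnorm : T ≤ Subgroup.normalizer (R : Set P) := sup_le Subgroup.le_normalizer (by
      rw [Subgroup.zpowers_le]; exact hxnorm)
    have hRT : R < T := lt_of_le_of_ne le_sup_left (by
      intro h
      exact hxR (h ▸ (le_sup_right : Subgroup.zpowers (x:P) ≤ T)
        (Subgroup.mem_zpowers _)))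
    have hcardRT : Nat.card R < Nat.card T := by
      simp only [← SetLike.coe_sort_coe, Nat.card_coe_set_eq]
      exact Set.ncard_lt_ncard (by exact_mod_cast hRT) (Set.toFinite _)
    have hcardTS : Nat.card T ≤ Nat.card S := by
      simp only [← SetLike.coe_sort_coe, Nat.card_coe_set_eq]
      exact Set.ncard_le_ncard hTS (Set.toFinite _)
    have hT : T ∈ X := ih S hS T hTS (by omega)
    refine hX T hT R le_sup_left ?_
    constructor
    rintro ⟨a, haT⟩ ha g
    rw [Subgroup.mem_subgroupOf] at ha ⊢
    have := (Subgroup.mem_normalizer_iff.mp (hTnorm g.2) a).mp ha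
    simpa using this


theorem statement14 (p : ℕ) [Fact p.Prime] (P : Type) [Group P] [Fintype P]
    (hP : IsPGroup p P)
    (X : Set (Subgroup P))
    (hX : ∀ S ∈ X, ∀ R : Subgroup P, R ≤ S → (R.subgroupOf S).Normal → R ∈ X)
    (Q : Subgroup P) (E F : Subgroup P)
    (hE : E ∈ X) (hFQ : F ≤ Q) (hF : F ∈ X)
    (hmax : ∀ L : Subgroup P, L ≤ Q → L ∈ X → Nat.card L ≤ Nat.card F) :
    F.relIndex Q ≤ E.index := by
  have hsub : ∀ S ∈ X, ∀ R : Subgroup P, R ≤ S → R ∈ X := fun S hS R hRS =>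
    subX_aux p P hP X hX (Nat.card S) S hS R hRS (Nat.sub_le _ _)
  set L := E ⊓ Q with hLdef
  have hL : L ∈ X := hsub E hE L inf_le_left
  have hcardLF : Nat.card L ≤ Nat.card F := hmax L inf_le_right hL
  have cardrel : ∀ H : Subgroup P, H ≤ Q → H.relIndex Q * Nat.card H = Nat.card Q := by
    intro H hHQ
    have h1 : Nat.card (H.subgroupOf Q) * (H.subgroupOf Q).index = Nat.card Q :=
      Subgroup.card_mul_index (H.subgroupOf Q)
    have h2 : Nat.card (H.subgroupOf Q) = Nat.card H :=
      Nat.card_congr (Subgroup.subgroupOfEquivOfLe hHQ).toEquiv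
    rw [h2] at h1
    rw [Subgroup.relIndex, mul_comm]
    exact h1
  have hFrel := cardrel F hFQ
  have hLrel := cardrel L inf_le_right
  have hFpos : 0 < Nat.card F := Nat.card_pos
  have step1 : F.relIndex Q ≤ L.relIndex Q := by
    have : F.relIndex Q * Nat.card F ≤ L.relIndex Q * Nat.card F := by
      rw [hFrel]
      calc Nat.card Q = L.relIndex Q * Nat.card L := hLrel.symm
        _ ≤ L.relIndex Q * Nat.card F := Nat.mul_le_mul_left _ hcardLF
    exact Nat.le_of_mul_le_mul_right this hFpos
  have step2 : L.relIndex Q = E.relIndex Q := Subgroup.inf_relIndex_right E Q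
  have step3 : E.relIndex Q ≤ E.index := by
    have hne : E.relIndex ⊤ ≠ 0 := by
      rw [Subgroup.relIndex_top_right]
      exact Subgroup.index_ne_zero_of_finite
    have := Subgroup.relIndex_le_of_le_right (le_top : Q ≤ ⊤) hne
    rwa [Subgroup.relIndex_top_right] at this
  omega


end LowerDefect
end
end
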